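/- Defining f(i,m) := Σ over (s_m,...,s_0) ∈ {0,...,t−1}^{m+1} with Σ_{r=0}^{m} s_r·t^r ≤ Σ_{r=0}^{m} s'_r·t^r of Σ_{k=0}^{m} d^{(N)}(i·t^k + Σ_{ℓ=0}^{k−1} s_{m−ℓ}·t^{k−1−ℓ}, i·t^{k+1} + Σ_{ℓ=0}^{k} s_{m−ℓ}·t^{k−ℓ}), where (s'_{h−1},...,s'_0) is the t-ary representation of N−1, it holds that f(i, h−1) = Σ_{j=0}^{N−1} d̂(i, i·t^h + j mod N) for every i ∈ {0,...,N−1}. -/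

import Mathlib

/-- The mod-`N` extension of a metric `d` on `{0,...,N-1}`. -/
def dmod (d : ℕ → ℕ → ℝ) (N x y : ℕ) : ℝ := d (x % N) (y % N)

/-- The `r`-th digit of `j` in base `t`. -/
def digit (t j r : ℕ) : ℕ := j / t ^ r % t

/-- The pseudo-distance `d̂(i, i·t^h + j mod N)`, defined as the length of the
`t`-ary chain from `i` to `i·t^h + j` determined by the base-`t` digits of `j`. -/
def hatd (d : ℕ → ℕ → ℝ) (N t h i j : ℕ) : ℝ :=
  ∑ k ∈ Finset.range h,
    dmod d N
      (i * t ^ k + ∑ ℓ ∈ Finset.range k, digit t j (h - 1 - ℓ) * t ^ (k - 1 - ℓ))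
      (i * t ^ (k + 1) + ∑ ℓ ∈ Finset.range (k + 1), digit t j (h - 1 - ℓ) * t ^ (k - ℓ))

/-- Extend a digit tuple `s : Fin m → Fin t` to a function `ℕ → ℕ` (zero beyond `m`). -/
def extF {t : ℕ} (m : ℕ) (s : Fin m → Fin t) : ℕ → ℕ :=
  fun ℓ => if hℓ : ℓ < m then (s ⟨ℓ, hℓ⟩ : ℕ) else 0

/-- The `(m+1)`-level chain sum
`Σ_{k=0}^{m} D(i·t^k + Σ_{ℓ=0}^{k−1} s_{m−ℓ}·t^{k−1−ℓ}, i·t^{k+1} + Σ_{ℓ=0}^{k} s_{m−ℓ}·t^{k−ℓ})`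
for a digit assignment `s` (here `D` plays the role of `d^{(N)}`). -/
def chainTerm (D : ℕ → ℕ → ℝ) (t i m : ℕ) (s : ℕ → ℕ) : ℝ :=
  ∑ k ∈ Finset.range (m + 1),
    D (i * t ^ k + ∑ ℓ ∈ Finset.range k, s (m - ℓ) * t ^ (k - 1 - ℓ))
      (i * t ^ (k + 1) + ∑ ℓ ∈ Finset.range (k + 1), s (m - ℓ) * t ^ (k - ℓ))

/-- `f(i,m)`: the chain sum over all digit tuples `(s_m,...,s_0) ∈ {0,...,t−1}^{m+1}`
whose value `Σ_r s_r·t^r` does not exceed `Σ_r s'_r·t^r`. -/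
def fsum (D : ℕ → ℕ → ℝ) (t i m : ℕ) (s' : ℕ → ℕ) : ℝ :=
  ∑ s : Fin (m + 1) → Fin t,
    if ∑ r ∈ Finset.range (m + 1), extF (m + 1) s r * t ^ r ≤
        ∑ r ∈ Finset.range (m + 1), s' r * t ^ r then
      chainTerm D t i m (extF (m + 1) s)
    else 0

/-- `g(i,m)`: the chain sum over all digit tuples `(s_m,...,s_0) ∈ {0,...,t−1}^{m+1}`. -/
def gsum (D : ℕ → ℕ → ℝ) (t i m : ℕ) : ℝ :=
  ∑ s : Fin (m + 1) → Fin t, chainTerm D t i m (extF (m + 1) s)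

lemma digit_sum (t j : ℕ) : ∀ h, ∑ r ∈ Finset.range h, digit t j r * t ^ r = j % t ^ h := by
  intro h
  induction h with
  | zero => simp [Nat.mod_one]
  | succ h ih =>
    rw [Finset.sum_range_succ, ih, pow_succ, Nat.mod_mul]
    simp [digit]
    ring

/-- Lemma 4: `f(i, h−1) = Σ_{j=0}^{N−1} d̂(i, i·t^h + j mod N)` for `i ∈ {0,...,N−1}`,
where `s'` is the `t`-ary representation of `N−1`. -/
theorem stmt_10 (n h t σ N : ℕ) (hn : 2 ≤ n) (hh : 2 ≤ h)
    (ht : Nat.Prime t) (htl : ⌈(n : ℝ) ^ ((1 : ℝ) / h)⌉₊ ≤ t)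
    (hσ : σ ≤ 1) (hNdef : N = n - σ)
    (d : ℕ → ℕ → ℝ)
    (hd0 : ∀ x < n, d x x = 0)
    (hdpos : ∀ x < n, ∀ y < n, x ≠ y → 0 < d x y)
    (hdsymm : ∀ x < n, ∀ y < n, d x y = d y x)
    (hdtri : ∀ x < n, ∀ y < n, ∀ z < n, d x z ≤ d x y + d y z) :
    ∀ i < N,
      fsum (dmod d N) t i (h - 1) (digit t (N - 1)) =
        ∑ j ∈ Finset.range N, hatd d N t h i j := by
  intro i hi
  have ht2 : 2 ≤ t := ht.two_le
  -- t ^ h ≥ n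
  have hnth : n ≤ t ^ h := by
    have hx : (n : ℝ) ^ ((1 : ℝ) / h) ≤ (t : ℝ) :=
      le_trans (Nat.le_ceil _) (by exact_mod_cast htl)
    have hcast : (n : ℝ) ≤ (t : ℝ) ^ h := by
      have h1 : ((n : ℝ) ^ ((1 : ℝ) / h)) ^ h = (n : ℝ) := by
        rw [← Real.rpow_natCast ((n : ℝ) ^ ((1 : ℝ) / h)) h, ← Real.rpow_mul (by positivity)]
        rw [one_div_mul_cancel (by exact_mod_cast (by omega : h ≠ 0)), Real.rpow_one]
      calc (n : ℝ) = ((n : ℝ) ^ ((1 : ℝ) / h)) ^ h := h1.symm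
        _ ≤ (t : ℝ) ^ h := by
            exact pow_le_pow_left₀ (by positivity) hx h
    exact_mod_cast hcast
  have hN0 : 0 < N := by omega
  have hNle : N ≤ n := by omega
  obtain ⟨m, rfl⟩ : ∃ m, h = m + 1 := ⟨h - 1, by omega⟩
  simp only [Nat.add_sub_cancel]
  have hNth : N - 1 < t ^ (m + 1) := by omega
  set e : Fin (t ^ (m + 1)) ≃ (Fin (m + 1) → Fin t) := finFunctionFinEquiv.symm with he
  have hA : ∀ (j : Fin (t ^ (m + 1))) (ℓ : ℕ), ℓ < m + 1 →
      extF (m + 1) (e j) ℓ = digit t (j : ℕ) ℓ := by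
    intro j ℓ hℓ
    simp [extF, hℓ, digit, he, finFunctionFinEquiv]
  -- the value of the digit tuple of j is j
  have hB : ∀ j : Fin (t ^ (m + 1)),
      ∑ r ∈ Finset.range (m + 1), extF (m + 1) (e j) r * t ^ r = (j : ℕ) := by
    intro j
    rw [Finset.sum_congr rfl (fun r hr => by
      rw [hA j r (Finset.mem_range.1 hr)]), digit_sum, Nat.mod_eq_of_lt j.isLt]
  have hs' : ∑ r ∈ Finset.range (m + 1), digit t (N - 1) r * t ^ r = N - 1 := by
    rw [digit_sum, Nat.mod_eq_of_lt hNth]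
  have hC : ∀ j : Fin (t ^ (m + 1)),
      chainTerm (dmod d N) t i m (extF (m + 1) (e j)) = hatd d N t (m + 1) i (j : ℕ) := by
    intro j
    unfold chainTerm hatd
    refine Finset.sum_congr rfl fun k hk => ?_
    simp only [Nat.add_sub_cancel]
    congr 1
    · congr 1
      exact Finset.sum_congr rfl fun ℓ hℓ => by rw [hA j (m - ℓ) (by omega)]
    · congr 1
      exact Finset.sum_congr rfl fun ℓ hℓ => by rw [hA j (m - ℓ) (by omega)]
  unfold fsum
  rw [← Equiv.sum_comp e]
  have hterm : ∀ j : Fin (t ^ (m + 1)),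
      (if ∑ r ∈ Finset.range (m + 1), extF (m + 1) (e j) r * t ^ r ≤
          ∑ r ∈ Finset.range (m + 1), digit t (N - 1) r * t ^ r then
        chainTerm (dmod d N) t i m (extF (m + 1) (e j))
      else 0) =
      (if (j : ℕ) < N then hatd d N t (m + 1) i (j : ℕ) else 0) := by
    intro j
    rw [hB, hs', hC]
    by_cases hj : (j : ℕ) < N
    · rw [if_pos (by omega), if_pos hj]
    · rw [if_neg (by omega), if_neg hj]
  rw [Finset.sum_congr rfl fun j _ => hterm j]
  rw [Fin.sum_univ_eq_sum_range (fun j => if j < N then hatd d N t (m + 1) i j else 0)]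
  rw [← Finset.sum_subset (Finset.range_subset_range.2 (le_trans hNle hnth))
      (fun x _ hx => by rw [if_neg (by simpa using hx)])]
  exact Finset.sum_congr rfl fun j hj => if_pos (Finset.mem_range.1 hj)
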